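/- Let R be a finite commutative chain ring with residue field F_q of characteristic p, and let n be coprime to p. Then every ideal of R[X]/⟨X^n − 1⟩ is principal. -/

import Mathlib

open Polynomial

universe u

-- In a finite monoid, some positive power of every element is idempotent.
lemma aux_pow_idem {S : Type*} [Monoid S] [Finite S] (a : S) :
    ∃ k, 0 < k ∧ IsIdempotentElem (a ^ k) := by
  obtain ⟨i, j, hij, h⟩ := Finite.exists_ne_map_eq_of_infinite (fun n : ℕ => a ^ n)
  wlog hlt : i < j generalizing i j
  · exact this j i hij.symm h.symm (by omega)
  set d := j - i with hd
  have hd0 : 0 < d := by omega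
  have hstep : ∀ k, i ≤ k → a ^ (k + d) = a ^ k := by
    intro k hk
    have : a ^ (k + d) = a ^ (k - i) * a ^ (i + d) := by
      rw [← pow_add]; congr 1; omega
    rw [this, show i + d = j by omega, ← h, ← pow_add, show k - i + i = k by omega]
  have hrep : ∀ c k, i ≤ k → a ^ (k + d * c) = a ^ k := by
    intro c
    induction c with
    | zero => simp
    | succ c ih =>
      intro k hk
      have : k + d * (c + 1) = (k + d * c) + d := by ring
      rw [this, hstep _ (by omega), ih k hk]
  refine ⟨d * (i + 1), by positivity, ?_⟩
  unfold IsIdempotentElem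
  rw [← pow_add]
  have : d * (i + 1) + d * (i + 1) = d * (i + 1) + d * (i + 1) := rfl
  rw [show d * (i + 1) + d * (i + 1) = (d * (i + 1)) + d * (i + 1) from rfl]
  exact hrep (i + 1) (d * (i + 1)) (by nlinarith)

lemma aux_span_fin {R : Type*} [CommRing R]
    (hchain : ∀ I J : Ideal R, I ≤ J ∨ J ≤ I) (s : Finset R) :
    (Ideal.span (s : Set R)).IsPrincipal := by
  classical
  induction s using Finset.induction with
  | empty => exact ⟨0, by simp⟩
  | @insert a s ha ih =>
    obtain ⟨b, hb⟩ := ih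
    rw [Finset.coe_insert, Ideal.span_insert, hb]
    rcases hchain (Ideal.span {a}) (Ideal.span {b}) with h' | h'
    · exact ⟨b, sup_eq_right.mpr h'⟩
    · exact ⟨a, sup_eq_left.mpr h'⟩

lemma aux_key {S : Type u} [CommRing S] [Fintype S] {N : ℕ} (hcard : Fintype.card S ≤ N + 1)
    (IH : ∀ (T : Type u) [CommRing T] [Fintype T], Fintype.card T ≤ N →
      ∀ π : T, IsNilpotent π → nilradical T ≤ Ideal.span {π} → ∀ J : Ideal T, J.IsPrincipal)
    (π c : S) (hπ : IsNilpotent π) (hnil : nilradical S ≤ Ideal.span {π})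
    (hc : IsIdempotentElem c) (hc0 : c ≠ 0) (I : Ideal S) :
    ∃ a ∈ I, ∀ x ∈ I, ∃ s : S, (1 - c) * x = s * ((1 - c) * a) := by
  classical
  set K : Ideal S := Ideal.span {c} with hK
  have hcc : (1 - c) * c = 0 := by
    have := hc.eq
    ring_nf
    linear_combination - hc.eq
  letI : Fintype (S ⧸ K) := Fintype.ofFinite _
  have hsurj : Function.Surjective (Ideal.Quotient.mk K) := Ideal.Quotient.mk_surjective
  have hcardT : Fintype.card (S ⧸ K) ≤ N := by
    have hlt : Fintype.card (S ⧸ K) < Fintype.card S := by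
      apply Fintype.card_lt_of_surjective_not_injective _ hsurj
      intro hinj
      apply hc0
      apply hinj
      rw [map_zero, Ideal.Quotient.eq_zero_iff_mem]
      exact Ideal.subset_span rfl
    omega
  have hπT : IsNilpotent (Ideal.Quotient.mk K π) := hπ.map _
  have hnilT : nilradical (S ⧸ K) ≤ Ideal.span {Ideal.Quotient.mk K π} := by
    intro y hy
    obtain ⟨x, rfl⟩ := hsurj y
    obtain ⟨k, hk⟩ := hy
    have hxk : x ^ (k + 1) ∈ K := by
      rw [← Ideal.Quotient.eq_zero_iff_mem, map_pow, pow_succ, hk, zero_mul]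
    obtain ⟨u, hu⟩ := Ideal.mem_span_singleton'.mp hxk
    have hnx : ((1 - c) * x) ^ (k + 1) = 0 := by
      rw [mul_pow, ← hu, pow_succ]
      calc (1 - c) ^ k * (1 - c) * (u * c) = (1 - c) ^ k * u * ((1 - c) * c) := by ring
      _ = 0 := by rw [hcc, mul_zero]
    have hmem : (1 - c) * x ∈ nilradical S := ⟨k + 1, hnx⟩
    obtain ⟨t, ht⟩ := Ideal.mem_span_singleton'.mp (hnil hmem)
    rw [Ideal.mem_span_singleton']
    refine ⟨Ideal.Quotient.mk K t, ?_⟩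
    rw [← map_mul, ht, Ideal.Quotient.mk_eq_mk_iff_sub_mem]
    have : (1 - c) * x - x = -(x * c) := by ring
    rw [this]
    exact neg_mem (Ideal.mul_mem_left _ x (Ideal.subset_span rfl))
  obtain ⟨g, hg⟩ := IH (S ⧸ K) hcardT _ hπT hnilT (I.map (Ideal.Quotient.mk K))
  have hgmem : g ∈ I.map (Ideal.Quotient.mk K) := by
    rw [hg]; exact Ideal.mem_span_singleton_self g
  obtain ⟨a, haI, hag⟩ := (Ideal.mem_map_iff_of_surjective _ hsurj).mp hgmem
  refine ⟨a, haI, ?_⟩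
  intro x hx
  have hxmem : Ideal.Quotient.mk K x ∈ Ideal.span {Ideal.Quotient.mk K a} := by
    have hmm := Ideal.mem_map_of_mem (Ideal.Quotient.mk K) hx
    rw [hg] at hmm
    rwa [hag]
  obtain ⟨sb, hs⟩ := Ideal.mem_span_singleton'.mp hxmem
  obtain ⟨s, rfl⟩ := hsurj sb
  have hxa : s * a - x ∈ K := by
    rw [← Ideal.Quotient.mk_eq_mk_iff_sub_mem, map_mul]
    exact hs
  obtain ⟨u, hu⟩ := Ideal.mem_span_singleton'.mp hxa
  exact ⟨s, by linear_combination (1 - c) * hu - u * hcc⟩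

theorem aux_main : ∀ (N : ℕ) (S : Type u) [CommRing S] [Fintype S],
    Fintype.card S ≤ N → ∀ π : S, IsNilpotent π → nilradical S ≤ Ideal.span {π} →
    ∀ I : Ideal S, I.IsPrincipal := by
  intro N
  induction N with
  | zero =>
    intro S _ _ h
    exact absurd h (by have := Fintype.card_pos (α := S); omega)
  | succ N IH =>
    intro S _ _ hcard π hπ hnil I
    by_cases hcn : ∃ e : S, IsIdempotentElem e ∧ e ≠ 0 ∧ e ≠ 1
    · obtain ⟨e, he, he0, he1⟩ := hcn
      obtain ⟨a, haI, ha⟩ := aux_key hcard IH π e hπ hnil he he0 I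
      have he' : IsIdempotentElem (1 - e) := he.one_sub
      have h10 : (1 : S) - e ≠ 0 := fun h => he1 (by linear_combination -h)
      obtain ⟨b, hbI, hb⟩ := aux_key hcard IH π (1 - e) hπ hnil he' h10 I
      refine ⟨(1 - e) * a + e * b, le_antisymm ?_ ?_⟩
      · intro x hx
        obtain ⟨s, hs⟩ := ha x hx
        obtain ⟨t, ht⟩ := hb x hx
        rw [Submodule.mem_span_singleton]
        refine ⟨s * (1 - e) + t * e, ?_⟩
        rw [smul_eq_mul]
        linear_combination (-1 : S) * hs - ht + (s * a - s * b - t * a + t * b) * he.eq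
      · rw [Submodule.span_le, Set.singleton_subset_iff]
        exact I.add_mem (I.mul_mem_left _ haI) (I.mul_mem_left _ hbI)
    · push_neg at hcn
      have hloc : ∀ K : Ideal S, K ≠ ⊤ → K ≤ Ideal.span {π} := by
        intro K hK x hx
        obtain ⟨k, hk0, hk⟩ := aux_pow_idem x
        by_cases hx0 : x ^ k = 0
        · exact hnil ⟨k, hx0⟩
        · have hx1 : x ^ k = 1 := hcn _ hk hx0
          have : IsUnit x := by
            apply IsUnit.of_mul_eq_one (a := x) (x ^ (k - 1))
            rw [← pow_succ']
            rw [show k - 1 + 1 = k by omega]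
            exact hx1
          exact absurd (K.eq_top_of_isUnit_mem hx this) hK
      obtain ⟨M, hM⟩ := hπ
      have desc : ∀ d (J : Ideal S), J ≤ Ideal.span {π ^ (M - d)} → J.IsPrincipal := by
        intro d
        induction d with
        | zero =>
          intro J hJ
          have hb : Ideal.span {π ^ (M - 0)} = ⊥ := by
            rw [Nat.sub_zero, hM, Ideal.span_singleton_eq_bot]
          have hJb : J ≤ ⊥ := by rw [← hb]; exact hJ
          refine ⟨0, ?_⟩
          rw [le_bot_iff.mp hJb]
          exact (Ideal.span_singleton_eq_bot.mpr rfl).symm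
        | succ d ih =>
          intro J hJ
          by_cases hK : J.colon (Ideal.span {π ^ (M - (d + 1))}) = ⊤
          · have h1 : (1 : S) ∈ J.colon (Ideal.span {π ^ (M - (d + 1))}) := by
              rw [hK]; trivial
            have hmem : π ^ (M - (d + 1)) ∈ J := by
              have := Submodule.mem_colon_span_singleton.mp h1
              simpa using this
            exact ⟨π ^ (M - (d + 1)),
              le_antisymm hJ ((Ideal.span_singleton_le_iff_mem _).mpr hmem)⟩
          · have hKπ := hloc _ hK
            apply ih
            intro x hx
            obtain ⟨sx, hsx⟩ := Ideal.mem_span_singleton'.mp (hJ hx)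
            have hsK : sx ∈ J.colon (Ideal.span {π ^ (M - (d + 1))}) := by
              apply Submodule.mem_colon_span_singleton.mpr
              rw [smul_eq_mul, hsx]; exact hx
            obtain ⟨t, ht⟩ := Ideal.mem_span_singleton'.mp (hKπ hsK)
            rw [Ideal.mem_span_singleton]
            refine dvd_trans (pow_dvd_pow π (by omega : M - d ≤ M - (d + 1) + 1)) ?_
            refine ⟨t, ?_⟩
            rw [← hsx, ← ht]
            ring
      apply desc M I
      have : Ideal.span {π ^ (M - M)} = ⊤ := by
        rw [Nat.sub_self, pow_zero, Ideal.span_singleton_one]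
      rw [this]; exact le_top

set_option synthInstance.maxHeartbeats 800000 in
/-- Over a finite commutative chain ring R with residue field of characteristic p, if
gcd(n, p) = 1 then every ideal of R[X]/⟨X^n − 1⟩ (i.e. every cyclic code of length n
over R) is principal. -/
theorem stmt_19 (R : Type*) [CommRing R] [Fintype R] [IsLocalRing R]
    (hchain : ∀ I J : Ideal R, I ≤ J ∨ J ≤ I)
    (p : ℕ) (hp : p.Prime) (hchar : CharP (IsLocalRing.ResidueField R) p)
    (n : ℕ) (hn : 0 < n) (hco : Nat.Coprime n p) :
    ∀ I : Ideal (R[X] ⧸ Ideal.span {(X : R[X]) ^ n - 1}), I.IsPrincipal := by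
  classical
  set f : R[X] := X ^ n - 1 with hf
  have hmon : f.Monic := by
    have := Polynomial.monic_X_pow_sub_C (1 : R) hn.ne'
    rwa [map_one] at this
  haveI : Module.Finite R (AdjoinRoot f) := (AdjoinRoot.powerBasis' hmon).finite
  haveI hfin : Finite (R[X] ⧸ Ideal.span {f}) :=
    Module.finite_of_finite (R := R) (M := AdjoinRoot f)
  letI : Fintype (R[X] ⧸ Ideal.span {f}) := Fintype.ofFinite _
  -- the maximal ideal is principal, generated by a nilpotent
  obtain ⟨t, ht⟩ : (IsLocalRing.maximalIdeal R).IsPrincipal := by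
    have h2 := aux_span_fin hchain (IsLocalRing.maximalIdeal R : Set R).toFinset
    rwa [Set.coe_toFinset, Ideal.span_eq] at h2
  have ht' : IsLocalRing.maximalIdeal R = Ideal.span {t} := ht
  have htm : t ∈ IsLocalRing.maximalIdeal R := by
    rw [ht]; exact Submodule.mem_span_singleton_self t
  have htnil : IsNilpotent t := by
    obtain ⟨k, hk0, hk⟩ := aux_pow_idem t
    rcases IsLocalRing.isUnit_or_isUnit_one_sub_self (t ^ k) with hu | hu
    · exact absurd hu (mem_nonunits_iff.mp ((IsLocalRing.mem_maximalIdeal _).mp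
        (Ideal.pow_mem_of_mem _ htm k hk0)))
    · refine ⟨k, ?_⟩
      have h0 : t ^ k * (1 - t ^ k) = 0 := by linear_combination - hk.eq
      exact (IsUnit.mul_left_eq_zero hu).mp h0
  have hCtnil : IsNilpotent ((Ideal.Quotient.mk (Ideal.span {f})) (C t)) := by
    obtain ⟨M, hM⟩ := htnil
    exact ⟨M, by rw [← map_pow, ← map_pow, hM, map_zero, map_zero]⟩
  have hnil : nilradical (R[X] ⧸ Ideal.span {f}) ≤
      Ideal.span {Ideal.Quotient.mk (Ideal.span {f}) (C t)} := by
    intro y hy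
    obtain ⟨g, rfl⟩ := Ideal.Quotient.mk_surjective y
    obtain ⟨k, hk⟩ := hy
    have hdvd : f ∣ g ^ k := by
      rw [← Ideal.mem_span_singleton, ← Ideal.Quotient.eq_zero_iff_mem, map_pow]
      exact hk
    set K := IsLocalRing.ResidueField R
    have hnK : (n : K) ≠ 0 := by
      intro h
      exact (hp.coprime_iff_not_dvd.mp hco.symm) ((CharP.cast_eq_zero_iff K p n).mp h)
    have hsq : Squarefree ((X : K[X]) ^ n - 1) :=
      (Polynomial.X_pow_sub_one_separable_iff.mpr hnK).squarefree
    have hmapf : f.map (IsLocalRing.residue R) = (X : K[X]) ^ n - 1 := by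
      simp [hf]
    have hdvd2 : ((X : K[X]) ^ n - 1) ∣ (g.map (IsLocalRing.residue R)) ^ k := by
      rw [← hmapf, ← Polynomial.map_pow]
      exact Polynomial.map_dvd _ hdvd
    obtain ⟨hb, hhb⟩ := hsq.isRadical k _ hdvd2
    obtain ⟨h2, hh2⟩ := Polynomial.map_surjective _ IsLocalRing.residue_surjective hb
    have hker : g - f * h2 ∈ Ideal.span {C t} := by
      have hker1 : g - f * h2 ∈ RingHom.ker (Polynomial.mapRingHom (IsLocalRing.residue R)) := by
        rw [RingHom.mem_ker, Polynomial.coe_mapRingHom, Polynomial.map_sub, Polynomial.map_mul,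
          hmapf, hh2, hhb]
        ring
      rw [Polynomial.ker_mapRingHom, IsLocalRing.ker_residue, ht', Ideal.map_span,
        Set.image_singleton] at hker1
      exact hker1
    rw [Ideal.mem_span_singleton]
    obtain ⟨w, hw⟩ := Ideal.mem_span_singleton.mp hker
    refine ⟨Ideal.Quotient.mk _ w, ?_⟩
    have : (Ideal.Quotient.mk (Ideal.span {f})) (f * h2) = 0 := by
      rw [Ideal.Quotient.eq_zero_iff_mem]
      exact Ideal.mul_mem_right _ _ (Ideal.subset_span rfl)
    calc Ideal.Quotient.mk (Ideal.span {f}) g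
        = Ideal.Quotient.mk (Ideal.span {f}) (g - f * h2) := by
          rw [map_sub, this, sub_zero]
      _ = Ideal.Quotient.mk (Ideal.span {f}) (C t * w) := by rw [hw]
      _ = _ := by rw [map_mul]
  intro I
  exact aux_main (Fintype.card (R[X] ⧸ Ideal.span {f})) _ le_rfl _ hCtnil hnil I
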